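/- Let n and l be natural numbers with 2l + 2 ≤ n. Then the partial binomial sum satisfies ∑_{i=0}^{l} C(n, i) ≤ 2^{n−1} · exp(−(n − 2l − 2)² / (4(n − l − 1))). -/

import Mathlib

open Finset



lemma lemA (n k : ℕ) (h : 2*k < n) :
    ∑ i ∈ range (k+1), n.choose i ≤ 2^(n-1) := by
  have hinj : Set.InjOn (fun i => n - i) (range (k+1)) := by
    intro a ha b hb hab
    simp only [coe_range, Set.mem_Iio] at ha hb
    have : n - a = n - b := hab
    omega
  have hS' : ∑ i ∈ (range (k+1)).image (fun i => n - i), n.choose i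
      = ∑ i ∈ range (k+1), n.choose i := by
    rw [Finset.sum_image (fun a ha b hb => hinj (by simpa using ha) (by simpa using hb))]
    refine Finset.sum_congr rfl fun i hi => ?_
    simp only [mem_range] at hi
    exact Nat.choose_symm (by omega)
  have hdisj : Disjoint (range (k+1)) ((range (k+1)).image (fun i => n - i)) := by
    rw [Finset.disjoint_left]
    intro a ha hb
    simp only [mem_range] at ha
    simp only [mem_image, mem_range] at hb
    omega
  have hsub : (range (k+1)) ∪ ((range (k+1)).image (fun i => n - i)) ⊆ range (n+1) := by
    intro a ha
    simp only [mem_union, mem_image, mem_range] at ha ⊢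
    omega
  have h2 : 2 * ∑ i ∈ range (k+1), n.choose i ≤ 2^n := by
    calc 2 * ∑ i ∈ range (k+1), n.choose i
        = ∑ i ∈ range (k+1), n.choose i
          + ∑ i ∈ (range (k+1)).image (fun i => n - i), n.choose i := by
          rw [hS']; ring
      _ = ∑ i ∈ (range (k+1)) ∪ ((range (k+1)).image (fun i => n - i)), n.choose i := by
          rw [Finset.sum_union hdisj]
      _ ≤ ∑ i ∈ range (n+1), n.choose i := Finset.sum_le_sum_of_subset hsub
      _ = 2^n := Nat.sum_range_choose n
  have hpow : 2^n = 2^(n-1) * 2 := by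
    have hn : n - 1 + 1 = n := by omega
    rw [← pow_succ, hn]
  omega


lemma lemB (n l : ℕ) : ∀ (s j : ℕ), j ≤ l →
    n.choose j * ∏ t ∈ range s, (n - l - t) ≤ n.choose (j+s) * ∏ t ∈ range s, (l + t + 1) := by
  intro s
  induction s with
  | zero => simp
  | succ s ih =>
    intro j hj
    rw [prod_range_succ, prod_range_succ, ← mul_assoc, ← mul_assoc]
    have key : n.choose (j+s) * (n - l - s) ≤ n.choose (j+s+1) * (l+s+1) := by
      have h1 : n.choose (j+s+1) * (j+s+1) = n.choose (j+s) * (n - (j+s)) :=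
        Nat.choose_succ_right_eq n (j+s)
      refine Nat.le_of_mul_le_mul_right ?_ (Nat.succ_pos (j+s))
      calc n.choose (j+s) * (n - l - s) * (j+s+1)
          = n.choose (j+s) * ((n - l - s) * (j+s+1)) := by ring
        _ ≤ n.choose (j+s) * ((n - (j+s)) * (l+s+1)) :=
            Nat.mul_le_mul_left _ (Nat.mul_le_mul (by omega) (by omega))
        _ = n.choose (j+s+1) * (j+s+1) * (l+s+1) := by rw [h1]; ring
        _ = n.choose (j+s+1) * (l+s+1) * (j+s+1) := by ring
    calc (n.choose j * ∏ t ∈ range s, (n - l - t)) * (n - l - s)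
        ≤ (n.choose (j+s) * ∏ t ∈ range s, (l + t + 1)) * (n - l - s) :=
          Nat.mul_le_mul_right _ (ih j hj)
      _ = (∏ t ∈ range s, (l + t + 1)) * (n.choose (j+s) * (n - l - s)) := by ring
      _ ≤ (∏ t ∈ range s, (l + t + 1)) * (n.choose (j+s+1) * (l+s+1)) :=
          Nat.mul_le_mul_left _ key
      _ = (n.choose (j+(s+1)) * ∏ t ∈ range s, (l + t + 1)) * (l+s+1) := by
          rw [show j+(s+1) = (j+s)+1 from rfl]; ring

lemma sum_aux (c : ℝ) (s : ℕ) : ∑ t ∈ range s, (c - 2*t) = s*(c - s + 1) := by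
  induction s with
  | zero => simp
  | succ s ih =>
    rw [Finset.sum_range_succ, ih]
    push_cast
    ring

lemma lemC (n l s : ℕ) (hs : 2*(l+s) < n) :
    (∑ i ∈ range (l+1), (n.choose i : ℝ)) ≤
      2^(n-1) * Real.exp (-((s:ℝ) * ((n:ℝ) - 2*l - s)) / ((n:ℝ) - l)) := by
  set Q : ℝ := ∏ t ∈ range s, (((l:ℝ)+t+1) / ((n:ℝ)-l-t)) with hQ
  have hcast : ∀ t : ℕ, t < s → (t:ℝ) < s := fun t ht => by exact_mod_cast ht
  have hn' : (2*((l:ℝ)+s) : ℝ) < n := by exact_mod_cast hs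
  have hden : ∀ t ∈ range s, (0:ℝ) < (n:ℝ)-l-t := by
    intro t ht
    simp only [mem_range] at ht
    have := hcast t ht
    nlinarith
  have hP1 : ((∏ t ∈ range s, (n - l - t) : ℕ) : ℝ) = ∏ t ∈ range s, ((n:ℝ)-l-t) := by
    rw [Nat.cast_prod]
    refine Finset.prod_congr rfl fun t ht => ?_
    simp only [mem_range] at ht
    rw [Nat.cast_sub (by omega : t ≤ n - l), Nat.cast_sub (by omega : l ≤ n)]
  have hP1pos : (0:ℝ) < ∏ t ∈ range s, ((n:ℝ)-l-t) := Finset.prod_pos hden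
  have hterm : ∀ j, j ≤ l → (n.choose j : ℝ) ≤ (n.choose (j+s) : ℝ) * Q := by
    intro j hj
    have h0 := (Nat.cast_le (α := ℝ)).mpr (lemB n l s j hj)
    rw [Nat.cast_mul, Nat.cast_mul, hP1, Nat.cast_prod] at h0
    push_cast at h0
    have hQ' : Q = (∏ t ∈ range s, ((l:ℝ)+t+1)) / (∏ t ∈ range s, ((n:ℝ)-l-t)) := by
      rw [hQ, Finset.prod_div_distrib]
    rw [hQ', ← mul_div_assoc, le_div_iff₀ hP1pos]
    linarith
  have hsum1 : (∑ i ∈ range (l+1), (n.choose i : ℝ)) ≤ (∑ j ∈ range (l+1), (n.choose (j+s) : ℝ)) * Q := by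
    rw [Finset.sum_mul]
    exact Finset.sum_le_sum fun j hj => hterm j (by simpa [Nat.lt_succ_iff] using hj)
  have hshift : (∑ j ∈ range (l+1), (n.choose (j+s) : ℝ)) ≤ 2^(n-1) := by
    have h1 : ∑ j ∈ range (l+1), n.choose (j+s) = ∑ i ∈ Finset.Ico s (s+(l+1)), n.choose i := by
      rw [Finset.sum_Ico_eq_sum_range]
      simp only [Nat.add_sub_cancel_left]
      exact Finset.sum_congr rfl fun j _ => by rw [Nat.add_comm]
    have h2 : ∑ j ∈ range (l+1), n.choose (j+s) ≤ 2^(n-1) := by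
      rw [h1]
      calc ∑ i ∈ Finset.Ico s (s+(l+1)), n.choose i
          ≤ ∑ i ∈ range (l+s+1), n.choose i := Finset.sum_le_sum_of_subset (by
            intro a ha; simp only [Finset.mem_Ico, mem_range] at ha ⊢; omega)
        _ ≤ 2^(n-1) := lemA n (l+s) hs
    exact_mod_cast h2
  have hQnonneg : 0 ≤ Q :=
    Finset.prod_nonneg fun t ht => div_nonneg (by positivity) (le_of_lt (hden t ht))
  have hQexp : Q ≤ Real.exp (-((s:ℝ) * ((n:ℝ) - 2*l - s)) / ((n:ℝ) - l)) := by
    have hfac : ∀ t ∈ range s, ((l:ℝ)+t+1) / ((n:ℝ)-l-t)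
        ≤ Real.exp (-(((n:ℝ)-2*l-2*t-1) / ((n:ℝ)-l-t))) := by
      intro t ht
      have hd := hden t ht
      have heq : ((l:ℝ)+t+1) / ((n:ℝ)-l-t) = 1 - ((n:ℝ)-2*l-2*t-1) / ((n:ℝ)-l-t) := by
        field_simp
        ring
      rw [heq]
      have := Real.add_one_le_exp (-(((n:ℝ)-2*l-2*t-1) / ((n:ℝ)-l-t)))
      linarith
    have h2 : Q ≤ ∏ t ∈ range s, Real.exp (-(((n:ℝ)-2*l-2*t-1) / ((n:ℝ)-l-t))) :=
      Finset.prod_le_prod (fun t ht => div_nonneg (by positivity) (le_of_lt (hden t ht))) hfac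
    rw [← Real.exp_sum] at h2
    refine h2.trans (Real.exp_le_exp.mpr ?_)
    have hnl : (0:ℝ) < (n:ℝ) - l := by nlinarith
    have hA : ((s:ℝ) * ((n:ℝ) - 2*l - s)) / ((n:ℝ) - l)
        ≤ ∑ t ∈ range s, ((n:ℝ)-2*l-2*t-1) / ((n:ℝ)-l-t) := by
      have hsumnum : ∑ t ∈ range s, (((n:ℝ)-2*l-1) - 2*t) = (s:ℝ)*((n:ℝ)-2*l-s) := by
        rw [sum_aux]
        ring
      calc ((s:ℝ) * ((n:ℝ) - 2*l - s)) / ((n:ℝ) - l)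
          = ∑ t ∈ range s, ((((n:ℝ)-2*l-1) - 2*t) / ((n:ℝ)-l)) := by
            rw [← Finset.sum_div, hsumnum]
        _ ≤ ∑ t ∈ range s, ((n:ℝ)-2*l-2*t-1) / ((n:ℝ)-l-t) := by
            refine Finset.sum_le_sum fun t ht => ?_
            have hd := hden t ht
            simp only [mem_range] at ht
            have htr := hcast t ht
            have hnumn : 2*l + 2*t + 1 ≤ n := by omega
            have hnum : (0:ℝ) ≤ (n:ℝ)-2*l-1-2*t := by
              have := (Nat.cast_le (α := ℝ)).mpr hnumn
              push_cast at this
              linarith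
            have heqnum : ((n:ℝ)-2*l-1) - 2*t = (n:ℝ)-2*l-2*t-1 := by ring
            rw [heqnum]
            rw [div_le_div_iff₀ hnl hd]
            have hprod : (0:ℝ) ≤ ((n:ℝ)-2*l-2*t-1) * t :=
              mul_nonneg (by linarith) (Nat.cast_nonneg t)
            nlinarith [hprod]
    calc ∑ t ∈ range s, -(((n:ℝ)-2*l-2*t-1) / ((n:ℝ)-l-t))
        = -∑ t ∈ range s, (((n:ℝ)-2*l-2*t-1) / ((n:ℝ)-l-t)) := by
          rw [← Finset.sum_neg_distrib]
      _ ≤ -(((s:ℝ) * ((n:ℝ) - 2*l - s)) / ((n:ℝ) - l)) := by linarith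
      _ = -((s:ℝ) * ((n:ℝ) - 2*l - s)) / ((n:ℝ) - l) := by ring
  calc (∑ i ∈ range (l+1), (n.choose i : ℝ))
      ≤ (∑ j ∈ range (l+1), (n.choose (j+s) : ℝ)) * Q := hsum1
    _ ≤ 2^(n-1) * Q := mul_le_mul_of_nonneg_right hshift hQnonneg
    _ ≤ 2^(n-1) * Real.exp (-((s:ℝ) * ((n:ℝ) - 2*l - s)) / ((n:ℝ) - l)) :=
        mul_le_mul_of_nonneg_left hQexp (by positivity)

theorem stmt_6 (n l : ℕ) (h : 2 * l + 2 ≤ n) :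
    (∑ i ∈ Finset.range (l + 1), (n.choose i : ℝ)) ≤
      2 ^ (n - 1) *
        Real.exp (-((n : ℝ) - 2 * l - 2) ^ 2 / (4 * ((n : ℝ) - l - 1))) := by
  rcases Nat.even_or_odd n with ⟨m, hm⟩ | ⟨m, hm⟩
  · -- n = m + m, even
    obtain ⟨s, hsm⟩ : ∃ s, m = l + 1 + s := ⟨m - l - 1, by omega⟩
    have hs : 2*(l+s) < n := by omega
    refine (lemC n l s hs).trans ?_
    refine mul_le_mul_of_nonneg_left (Real.exp_le_exp.mpr ?_) (by positivity)
    have hnr : (n:ℝ) = 2*l + 2 + 2*s := by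
      have : n = 2*l + 2 + 2*s := by omega
      exact_mod_cast this
    rw [hnr]
    rw [div_le_div_iff₀ (by push_cast; nlinarith [Nat.cast_nonneg (α := ℝ) l, Nat.cast_nonneg (α := ℝ) s])
      (by push_cast; nlinarith [Nat.cast_nonneg (α := ℝ) l, Nat.cast_nonneg (α := ℝ) s])]
    nlinarith [Nat.cast_nonneg (α := ℝ) l, Nat.cast_nonneg (α := ℝ) s, mul_nonneg (Nat.cast_nonneg (α := ℝ) l) (Nat.cast_nonneg (α := ℝ) s), sq_nonneg ((s:ℝ)), sq_nonneg ((s:ℝ)-1), sq_nonneg ((l:ℝ)*(s:ℝ))]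
  · -- n = 2*m+1, odd
    obtain ⟨s, hsm, hs1⟩ : ∃ s, m = l + s ∧ 1 ≤ s := ⟨m - l, by omega, by omega⟩
    have hs : 2*(l+s) < n := by omega
    refine (lemC n l s hs).trans ?_
    refine mul_le_mul_of_nonneg_left (Real.exp_le_exp.mpr ?_) (by positivity)
    have hnr : (n:ℝ) = 2*l + 2*s + 1 := by
      have : n = 2*l + 2*s + 1 := by omega
      exact_mod_cast this
    have hs1r : (1:ℝ) ≤ s := by exact_mod_cast hs1
    rw [hnr]
    rw [div_le_div_iff₀ (by nlinarith [Nat.cast_nonneg (α := ℝ) l, Nat.cast_nonneg (α := ℝ) s])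
      (by nlinarith [Nat.cast_nonneg (α := ℝ) l, Nat.cast_nonneg (α := ℝ) s])]
    nlinarith [Nat.cast_nonneg (α := ℝ) l, Nat.cast_nonneg (α := ℝ) s, mul_nonneg (Nat.cast_nonneg (α := ℝ) l) (Nat.cast_nonneg (α := ℝ) s), sq_nonneg ((s:ℝ)), sq_nonneg ((s:ℝ)-1), mul_nonneg (Nat.cast_nonneg (α := ℝ) l) (sq_nonneg ((s:ℝ)-1))]
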